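/- Let Q be the character table of a finite group G. For x ∈ ℂⁿ, the matrix Q D_x Q⁻¹ is entrywise nonnegative if and only if the n inequalities Σ_{k=1}^n |cl(g_k)| χ_i(g_k) x_k ≥ 0 hold for all i = 1,…,n (i.e., only the first-column entries need be checked). -/

import Mathlib

open scoped ComplexOrder
open CategoryTheory

/-- The character table of a finite group: rows indexed by (irreducible) representations,
columns by conjugacy-class representatives. -/
noncomputable def charTable {G : Type} [Group G] {n : ℕ}
    (ρ : Fin n → FDRep ℂ G) (g : Fin n → G) : Matrix (Fin n) (Fin n) ℂ :=
  Matrix.of fun i j => (ρ i).character (g j)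

private lemma classSum {G : Type} [Group G] [Fintype G] {n : ℕ}
    (g : Fin n → G)
    (hgdist : ∀ i j, IsConj (g i) (g j) → i = j)
    (hgall : ∀ h : G, ∃ i, IsConj h (g i))
    (f : G → ℂ) (hf : ∀ a h : G, f (a * h * a⁻¹) = f h) :
    ∑ h : G, f h = ∑ k, (Nat.card {h : G // IsConj (g k) h} : ℂ) * f (g k) := by
  classical
  have key : ∀ h : G, ∃! k, IsConj (g k) h := by
    intro h
    obtain ⟨k, hk⟩ := hgall h
    exact ⟨k, hk.symm, fun k' hk' => hgdist k' k (hk'.trans hk)⟩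
  choose idx hidx huniq using key
  rw [← Finset.sum_fiberwise Finset.univ idx f]
  refine Finset.sum_congr rfl fun k _ => ?_
  have hfilter : Finset.univ.filter (fun h => idx h = k)
      = Finset.univ.filter (fun h => IsConj (g k) h) := by
    ext h
    simp only [Finset.mem_filter, Finset.mem_univ, true_and]
    constructor
    · rintro rfl; exact hidx h
    · intro hc; exact (huniq h k hc).symm
  have hval : ∀ h ∈ Finset.univ.filter (fun h => IsConj (g k) h), f h = f (g k) := by
    intro h hh
    simp only [Finset.mem_filter] at hh
    obtain ⟨a, ha⟩ := isConj_iff.mp hh.2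
    rw [← ha, hf]
  rw [hfilter, Finset.sum_congr rfl hval, Finset.sum_const, nsmul_eq_mul]
  congr 1
  rw [Nat.card_eq_fintype_card, Fintype.card_subtype]

private lemma swapSum {n : ℕ} (a : Fin n → ℂ) (B : Fin n → Fin n → ℂ) (d : Fin n → ℂ) :
    ∑ k, (∑ m, a m * B m k) * d k = ∑ m, a m * ∑ k, B m k * d k := by
  simp only [Finset.sum_mul]
  rw [Finset.sum_comm]
  simp only [Finset.mul_sum, mul_assoc]

theorem stmt12 {G : Type} [Group G] [Fintype G] {n : ℕ}
    (ρ : Fin n → FDRep ℂ G)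
    (hsimple : ∀ i, Simple (ρ i))
    (hdistinct : ∀ i j, Nonempty (ρ i ≅ ρ j) → i = j)
    (hcomplete : ∀ V : FDRep ℂ G, Simple V → ∃ i, Nonempty (V ≅ ρ i))
    (g : Fin n → G)
    (hgdist : ∀ i j, IsConj (g i) (g j) → i = j)
    (hgall : ∀ h : G, ∃ i, IsConj h (g i)) (x : Fin n → ℂ) :
    (∀ i j, 0 ≤ (charTable ρ g * Matrix.diagonal x * (charTable ρ g)⁻¹) i j) ↔
      ∀ i, 0 ≤ ∑ k, (Nat.card {h : G // IsConj (g k) h} : ℂ) *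
        (ρ i).character (g k) * x k := by
  classical
  have hc0 : (Fintype.card G : ℂ) ≠ 0 := Nat.cast_ne_zero.mpr Fintype.card_ne_zero
  haveI : Invertible (Fintype.card G : ℂ) := invertibleOfNonzero hc0
  have hcnn : (0 : ℂ) ≤ (Fintype.card G : ℂ) := by
    rw [show ((Fintype.card G : ℂ)) = (((Fintype.card G : ℝ)) : ℂ) by push_cast; ring]
    exact Complex.zero_le_real.mpr (Nat.cast_nonneg _)
  have hcinv : (0 : ℂ) ≤ ((Fintype.card G : ℂ))⁻¹ := by
    rw [show ((Fintype.card G : ℂ))⁻¹ = ((((Fintype.card G : ℝ))⁻¹ : ℝ) : ℂ) by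
      push_cast; ring]
    exact Complex.zero_le_real.mpr (by positivity)
  set cl : Fin n → ℂ := fun k => (Nat.card {h : G // IsConj (g k) h} : ℂ) with hcl
  set M : Matrix (Fin n) (Fin n) ℂ :=
    Matrix.of (fun k j => cl k * (ρ j).character ((g k)⁻¹) / (Fintype.card G : ℂ))
    with hMdef
  -- summing a character over conjugacy classes
  have hclass : ∀ V : FDRep ℂ G,
      ∑ k, cl k * V.character (g k) = ∑ h : G, V.character h := fun V =>
    (classSum g hgdist hgall V.character (fun a h => FDRep.char_conj V h a)).symm
  -- the average of a character is nonnegative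
  have havg : ∀ V : FDRep ℂ G,
      0 ≤ (∑ h : G, V.character h) / (Fintype.card G : ℂ) := by
    intro V
    have h1 : (∑ h : G, V.character h) / (Fintype.card G : ℂ)
        = ⅟(Fintype.card G : ℂ) • ∑ h : G, V.character h := by
      rw [invOf_eq_inv, smul_eq_mul, div_eq_mul_inv, mul_comm]
    haveI : Invertible (Nat.card G : ℂ) := invertibleOfNonzero (by rw [Nat.card_eq_fintype_card]; exact hc0)
    rw [h1, invOf_eq_inv, smul_eq_mul, ← Nat.card_eq_fintype_card, FDRep.average_char_eq_finrank_invariants]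
    rw [show ((Module.finrank ℂ (Representation.invariants V.ρ) : ℂ))
        = (((Module.finrank ℂ (Representation.invariants V.ρ) : ℝ)) : ℂ) by push_cast; ring]
    exact Complex.zero_le_real.mpr (Nat.cast_nonneg _)
  -- two-fold class functions
  have hconj2 : ∀ (V W : FDRep ℂ G) (a h : G),
      V.character (a * h * a⁻¹) * W.character ((a * h * a⁻¹)⁻¹)
        = V.character h * W.character h⁻¹ := by
    intro V W a h
    rw [show (a * h * a⁻¹)⁻¹ = a * h⁻¹ * a⁻¹ by group, FDRep.char_conj, FDRep.char_conj]
  have hclass2 : ∀ V W : FDRep ℂ G,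
      ∑ k, cl k * (V.character (g k) * W.character ((g k)⁻¹))
        = ∑ h : G, V.character h * W.character h⁻¹ :=
    fun V W => (classSum g hgdist hgall (fun h => V.character h * W.character h⁻¹) (hconj2 V W)).symm
  -- orthogonality
  have horth : ∀ i j : Fin n,
      (∑ h : G, (ρ i).character h * (ρ j).character h⁻¹) / (Fintype.card G : ℂ)
        = if i = j then 1 else 0 := by
    intro i j
    haveI := hsimple i
    haveI := hsimple j
    letI : Invertible ((Nat.card G : ℕ) : ℂ) := invertibleOfNonzero (by rw [Nat.card_eq_fintype_card]; exact hc0)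
    have h1 := FDRep.char_orthonormal (k := ℂ) (G := G) (ρ i) (ρ j)
    rw [Nat.card_eq_fintype_card] at h1
    have h1' : ((Fintype.card G : ℂ))⁻¹
        * ∑ h : G, (ρ i).character h * (ρ j).character h⁻¹
        = if Nonempty (ρ i ≅ ρ j) then (1 : ℂ) else (0 : ℂ) := by exact_mod_cast h1
    rw [div_eq_mul_inv, mul_comm, h1']
    by_cases hij : i = j
    · subst hij
      rw [if_pos ⟨Iso.refl _⟩, if_pos rfl]
    · rw [if_neg (fun hne => hij (hdistinct i j hne)), if_neg hij]
  have hQM : charTable ρ g * M = 1 := by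
    ext i j
    rw [Matrix.mul_apply, Matrix.one_apply]
    have h1 : ∀ k, charTable ρ g i k * M k j
        = cl k * ((ρ i).character (g k) * (ρ j).character ((g k)⁻¹))
          / (Fintype.card G : ℂ) := by
      intro k
      simp only [charTable, M, Matrix.of_apply]
      ring
    rw [Finset.sum_congr rfl (fun k _ => h1 k), ← Finset.sum_div, hclass2 (ρ i) (ρ j),
      horth]
  have hMQ : M * charTable ρ g = 1 := mul_eq_one_comm.mp hQM
  have hQinv : (charTable ρ g)⁻¹ = M := Matrix.inv_eq_right_inv hQM
  have hMQapp : ∀ k k' : Fin n,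
      ∑ m, M k m * (ρ m).character (g k') = if k = k' then 1 else 0 := by
    intro k k'
    have h2 : ∑ m, M k m * (ρ m).character (g k') = (M * charTable ρ g) k k' := by
      rw [Matrix.mul_apply]; rfl
    rw [h2, hMQ, Matrix.one_apply]
  have hEd : ∀ i j, (charTable ρ g * Matrix.diagonal x * (charTable ρ g)⁻¹) i j
      = ∑ k, (ρ i).character (g k) * x k * M k j := by
    intro i j
    rw [hQinv, Matrix.mul_apply]
    refine Finset.sum_congr rfl fun k _ => ?_
    rw [Matrix.mul_diagonal]
    rfl
  constructor
  · -- forward direction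
    intro hpos i
    set N := charTable ρ g * Matrix.diagonal x * (charTable ρ g)⁻¹ with hN
    have hNQ : N * charTable ρ g = charTable ρ g * Matrix.diagonal x := by
      rw [hN, Matrix.mul_assoc, hQinv, hMQ, Matrix.mul_one]
    have step1 : ∑ k, cl k * (ρ i).character (g k) * x k
        = ∑ k, (N * charTable ρ g) i k * cl k := by
      rw [hNQ]
      refine Finset.sum_congr rfl fun k _ => ?_
      rw [Matrix.mul_diagonal]
      show cl k * (ρ i).character (g k) * x k = charTable ρ g i k * x k * cl k
      simp only [charTable, Matrix.of_apply]; ring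
    have step2 : ∑ k, (N * charTable ρ g) i k * cl k
        = ∑ j, N i j * ∑ k, charTable ρ g j k * cl k := by
      simp only [Matrix.mul_apply]
      exact swapSum (fun j => N i j) (fun j k => charTable ρ g j k) cl
    rw [step1, step2]
    refine Finset.sum_nonneg fun j _ => mul_nonneg (hpos i j) ?_
    have h3 : ∑ k, charTable ρ g j k * cl k = ∑ h : G, (ρ j).character h := by
      rw [← hclass (ρ j)]
      exact Finset.sum_congr rfl fun k _ => by
        simp only [charTable, Matrix.of_apply]; ring
    rw [h3, show (∑ h : G, (ρ j).character h)
        = (Fintype.card G : ℂ) * ((∑ h : G, (ρ j).character h) / (Fintype.card G : ℂ))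
        by field_simp]
    exact mul_nonneg hcnn (havg (ρ j))
  · -- backward direction
    intro hS i j
    rw [hEd i j]
    set v : Fin n → ℂ := fun k =>
      (ρ i).character (g k) * (ρ j).character ((g k)⁻¹) with hv
    set cm : Fin n → ℂ := fun m => ∑ k, v k * M k m with hcm
    -- each cm m is nonnegative
    have hcmnn : ∀ m, 0 ≤ cm m := by
      intro m
      set T : FDRep ℂ G := MonoidalCategory.tensorObj
        (MonoidalCategory.tensorObj (ρ i) (FDRep.of (Representation.dual (ρ j).ρ)))
        (FDRep.of (Representation.dual (ρ m).ρ)) with hT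
      have hTchar : ∀ h : G, T.character h
          = (ρ i).character h * (ρ j).character h⁻¹ * (ρ m).character h⁻¹ := by
        intro h
        rw [hT, FDRep.char_tensor, Pi.mul_apply, FDRep.char_tensor, Pi.mul_apply,
          FDRep.char_dual, FDRep.char_dual]
      have h1 : cm m = (∑ h : G, T.character h) / (Fintype.card G : ℂ) := by
        show ∑ k, v k * M k m = _
        have h2 : ∀ k, v k * M k m
            = cl k * T.character (g k) / (Fintype.card G : ℂ) := by
          intro k
          rw [hTchar]
          simp only [hv, M, Matrix.of_apply]
          ring
        rw [Finset.sum_congr rfl (fun k _ => h2 k), ← Finset.sum_div, hclass]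
      rw [h1]
      exact havg T
    -- reconstruct v from cm
    have hvrec : ∀ k, v k = ∑ m, cm m * (ρ m).character (g k) := by
      intro k
      have h1 : ∑ m, cm m * (ρ m).character (g k)
          = ∑ k', v k' * ∑ m, M k' m * (ρ m).character (g k) := by
        simp only [hcm]
        exact swapSum v M (fun m => (ρ m).character (g k))
      rw [h1]
      simp only [hMQapp]
      simp [Finset.sum_ite_eq, mul_ite, mul_one, mul_zero]
    have hexp : ∑ k, (ρ i).character (g k) * x k * M k j
        = ∑ m, cm m * ((∑ k, cl k * (ρ m).character (g k) * x k)
          / (Fintype.card G : ℂ)) := by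
      have h1 : ∀ k, (ρ i).character (g k) * x k * M k j
          = v k * (cl k * x k / (Fintype.card G : ℂ)) := by
        intro k
        simp only [hv, M, Matrix.of_apply]
        ring
      rw [Finset.sum_congr rfl (fun k _ => h1 k)]
      have h2 : ∑ k, v k * (cl k * x k / (Fintype.card G : ℂ))
          = ∑ k, (∑ m, cm m * (ρ m).character (g k))
            * (cl k * x k / (Fintype.card G : ℂ)) :=
        Finset.sum_congr rfl fun k _ => by rw [← hvrec k]
      rw [h2, swapSum cm (fun m k => (ρ m).character (g k))
        (fun k => cl k * x k / (Fintype.card G : ℂ))]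
      refine Finset.sum_congr rfl fun m _ => ?_
      congr 1
      rw [Finset.sum_div]
      exact Finset.sum_congr rfl fun k _ => by ring
    rw [hexp]
    refine Finset.sum_nonneg fun m _ => mul_nonneg (hcmnn m) ?_
    rw [div_eq_mul_inv]
    exact mul_nonneg (hS m) hcinv
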